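/- Let k > 0, φ > 0, set c0 = k·coth(φ), and let c > 0 satisfy (c − c0)² > k². Set β = 2ck/((c − c0)² − k²). For ξ0, η0 ∈ ℝ write ξ = x − c0·t − ξ0 and η = x − c·t − η0, and define f(x,t) = β(1 − e^{i k ξ + φ}) − (1 + i c η)(1 + e^{i k ξ + φ}) and f'(x,t) = β(1 − e^{i k ξ − φ}) + (1 − i c η)(1 + e^{i k ξ − φ}). Then f and f' satisfy the Hirota bilinear equation i(∂_t f' · f − f' · ∂_t f) = ∂_x² f' · f − 2 ∂_x f' · ∂_x f + f' · ∂_x² f at every real (x,t). -/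

import Mathlib

/-- The Hirota bilinear equation associated with the Benjamin–Ono equation:
`i(∂_t f' · f − f' · ∂_t f) = ∂_x² f' · f − 2 ∂_x f' · ∂_x f + f' · ∂_x² f`
at all real `(x,t)`, where `g` plays the role of `f'`. -/
def HirotaBO (f g : ℝ → ℝ → ℂ) : Prop :=
  ∀ x t : ℝ,
    Complex.I * (deriv (fun s => g x s) t * f x t - g x t * deriv (fun s => f x s) t) =
      deriv (fun y => deriv (fun z => g z t) y) x * f x t
        - 2 * deriv (fun y => g y t) x * deriv (fun y => f y t) x
        + g x t * deriv (fun y => deriv (fun z => f z t) y) x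

set_option maxHeartbeats 1600000 in
set_option maxRecDepth 100000 in
/-- the tau functions of the single-breather solution of the
Benjamin–Ono equation on the traveling periodic wave background satisfy the
Hirota bilinear equation. -/
theorem hirota_breather (k φ ξ0 η0 c0 c β : ℝ) (hk : 0 < k) (hφ : 0 < φ)
    (hc0 : c0 = k * Real.cosh φ / Real.sinh φ)
    (hc : 0 < c) (hcon : (c - c0) ^ 2 > k ^ 2)
    (hβ : β = 2 * c * k / ((c - c0) ^ 2 - k ^ 2))
    (f f' : ℝ → ℝ → ℂ)
    (hf : ∀ x t : ℝ, f x t =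
      β * (1 - Complex.exp (Complex.I * (k * (x - c0 * t - ξ0)) + φ))
        - (1 + Complex.I * (c * (x - c * t - η0)))
            * (1 + Complex.exp (Complex.I * (k * (x - c0 * t - ξ0)) + φ)))
    (hf' : ∀ x t : ℝ, f' x t =
      β * (1 - Complex.exp (Complex.I * (k * (x - c0 * t - ξ0)) - φ))
        + (1 - Complex.I * (c * (x - c * t - η0)))
            * (1 + Complex.exp (Complex.I * (k * (x - c0 * t - ξ0)) - φ))) :
    HirotaBO f f' := by
  -- Real preliminaries
  have hs : 0 < Real.sinh φ := Real.sinh_pos_iff.mpr hφ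
  have h1 : c0 * Real.sinh φ = k * Real.cosh φ := by
    rw [hc0]; field_simp
  have hR : (c0 - k) * Real.exp (2*φ) = c0 + k := by
    have e2 : Real.exp (2*φ) = Real.exp φ * Real.exp φ := by
      rw [← Real.exp_add]; ring_nf
    have hep : (0:ℝ) < Real.exp φ := Real.exp_pos φ
    rw [Real.sinh_eq, Real.cosh_eq, Real.exp_neg] at h1
    rw [e2]
    field_simp at h1
    nlinarith [h1]
  have hc0k : 0 < c0 - k := by
    have h2 := Real.cosh_sub_sinh φ
    have h3 : c0 - k = k * Real.exp (-φ) / Real.sinh φ := by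
      rw [hc0, ← h2]; field_simp
    rw [h3]; positivity
  have hD : ((c - c0)^2 - k^2) ≠ 0 := by nlinarith
  have hc0kc : ((c0:ℂ) - ↑k) ≠ 0 := by
    have : ((c0 - k : ℝ) : ℂ) ≠ 0 := Complex.ofReal_ne_zero.mpr hc0k.ne'
    push_cast at this; exact this
  have hDc : (((c:ℂ) - ↑c0)^2 - (↑k)^2) ≠ 0 := by
    have : (((c - c0)^2 - k^2 : ℝ) : ℂ) ≠ 0 := Complex.ofReal_ne_zero.mpr hD
    push_cast at this; exact this
  have hRC : ((c0:ℂ) - ↑k) * Complex.exp (2*(φ:ℂ)) = ↑c0 + ↑k := by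
    have h2 : (((c0 - k) * Real.exp (2*φ) : ℝ) : ℂ) = ((c0 + k : ℝ) : ℂ) :=
      congrArg (fun r : ℝ => (r : ℂ)) hR
    push_cast at h2
    exact h2
  have hB : β * ((c - c0)^2 - k^2) = 2 * c * k := by
    rw [hβ]; field_simp
  have hBc : (β:ℂ) * (((c:ℂ) - ↑c0)^2 - (↑k)^2) = 2*↑c*↑k := by
    have h2 : ((β * ((c - c0)^2 - k^2) : ℝ) : ℂ) = ((2*c*k : ℝ) : ℂ) :=
      congrArg (fun r : ℝ => (r : ℂ)) hB
    push_cast at h2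
    exact h2
  intro x t
  have hid : ∀ w : ℝ, HasDerivAt (fun s : ℝ => (s : ℂ)) 1 w := fun w => by
    simpa using (hasDerivAt_id w).ofReal_comp
  -- exponentials, t-direction
  have hexpT : ∀ w : ℝ, HasDerivAt
      (fun s : ℝ => Complex.exp (Complex.I * (↑k * (↑x - ↑c0 * ↑s - ↑ξ0)) + ↑φ))
      (Complex.exp (Complex.I * (↑k * (↑x - ↑c0 * ↑w - ↑ξ0)) + ↑φ)
        * (-(Complex.I * ↑k * ↑c0))) w := by
    intro w
    have h := ((((((hid w).const_mul (c0:ℂ)).const_sub (x:ℂ)).sub_const (ξ0:ℂ)).const_mul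
        (k:ℂ)).const_mul Complex.I).add_const (φ:ℂ) |>.cexp
    convert h using 1
    ring
  have hexpT' : ∀ w : ℝ, HasDerivAt
      (fun s : ℝ => Complex.exp (Complex.I * (↑k * (↑x - ↑c0 * ↑s - ↑ξ0)) - ↑φ))
      (Complex.exp (Complex.I * (↑k * (↑x - ↑c0 * ↑w - ↑ξ0)) - ↑φ)
        * (-(Complex.I * ↑k * ↑c0))) w := by
    intro w
    have h := ((((((hid w).const_mul (c0:ℂ)).const_sub (x:ℂ)).sub_const (ξ0:ℂ)).const_mul
        (k:ℂ)).const_mul Complex.I).sub_const (φ:ℂ) |>.cexp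
    convert h using 1
    ring
  -- exponentials, x-direction
  have hexpX : ∀ w : ℝ, HasDerivAt
      (fun y : ℝ => Complex.exp (Complex.I * (↑k * (↑y - ↑c0 * ↑t - ↑ξ0)) + ↑φ))
      (Complex.exp (Complex.I * (↑k * (↑w - ↑c0 * ↑t - ↑ξ0)) + ↑φ) * (Complex.I * ↑k)) w := by
    intro w
    have h := (((((hid w).sub_const ((c0:ℂ) * ↑t)).sub_const (ξ0:ℂ)).const_mul
        (k:ℂ)).const_mul Complex.I).add_const (φ:ℂ) |>.cexp
    convert h using 1
    ring
  have hexpX' : ∀ w : ℝ, HasDerivAt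
      (fun y : ℝ => Complex.exp (Complex.I * (↑k * (↑y - ↑c0 * ↑t - ↑ξ0)) - ↑φ))
      (Complex.exp (Complex.I * (↑k * (↑w - ↑c0 * ↑t - ↑ξ0)) - ↑φ) * (Complex.I * ↑k)) w := by
    intro w
    have h := (((((hid w).sub_const ((c0:ℂ) * ↑t)).sub_const (ξ0:ℂ)).const_mul
        (k:ℂ)).const_mul Complex.I).sub_const (φ:ℂ) |>.cexp
    convert h using 1
    ring
  -- linear factors
  have hNT : HasDerivAt (fun s : ℝ => 1 + Complex.I * (↑c * (↑x - ↑c * ↑s - ↑η0)))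
      (-(Complex.I * ↑c^2)) t := by
    have h := (((((hid t).const_mul (c:ℂ)).const_sub (x:ℂ)).sub_const (η0:ℂ)).const_mul
        (c:ℂ)).const_mul Complex.I |>.const_add 1
    refine h.congr_deriv ?_
    ring
  have hMT : HasDerivAt (fun s : ℝ => 1 - Complex.I * (↑c * (↑x - ↑c * ↑s - ↑η0)))
      (Complex.I * ↑c^2) t := by
    have h := (((((hid t).const_mul (c:ℂ)).const_sub (x:ℂ)).sub_const (η0:ℂ)).const_mul
        (c:ℂ)).const_mul Complex.I |>.const_sub 1
    refine h.congr_deriv ?_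
    ring
  have hNX : ∀ w : ℝ, HasDerivAt (fun y : ℝ => 1 + Complex.I * (↑c * (↑y - ↑c * ↑t - ↑η0)))
      (Complex.I * ↑c) w := by
    intro w
    have h := ((((hid w).sub_const ((c:ℂ) * ↑t)).sub_const (η0:ℂ)).const_mul
        (c:ℂ)).const_mul Complex.I |>.const_add 1
    refine h.congr_deriv ?_
    ring
  have hMX : ∀ w : ℝ, HasDerivAt (fun y : ℝ => 1 - Complex.I * (↑c * (↑y - ↑c * ↑t - ↑η0)))
      (-(Complex.I * ↑c)) w := by
    intro w
    have h := ((((hid w).sub_const ((c:ℂ) * ↑t)).sub_const (η0:ℂ)).const_mul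
        (c:ℂ)).const_mul Complex.I |>.const_sub 1
    refine h.congr_deriv ?_
    ring
  -- time derivatives of f and f'
  have hfe : (fun s : ℝ => f x s) = (fun s : ℝ =>
      ↑β * (1 - Complex.exp (Complex.I * (↑k * (↑x - ↑c0 * ↑s - ↑ξ0)) + ↑φ))
        - (1 + Complex.I * (↑c * (↑x - ↑c * ↑s - ↑η0)))
            * (1 + Complex.exp (Complex.I * (↑k * (↑x - ↑c0 * ↑s - ↑ξ0)) + ↑φ))) :=
    funext fun s => hf x s
  have hge : (fun s : ℝ => f' x s) = (fun s : ℝ =>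
      ↑β * (1 - Complex.exp (Complex.I * (↑k * (↑x - ↑c0 * ↑s - ↑ξ0)) - ↑φ))
        + (1 - Complex.I * (↑c * (↑x - ↑c * ↑s - ↑η0)))
            * (1 + Complex.exp (Complex.I * (↑k * (↑x - ↑c0 * ↑s - ↑ξ0)) - ↑φ))) :=
    funext fun s => hf' x s
  have hfT : HasDerivAt (fun s : ℝ => f x s)
      (Complex.I * ↑k * ↑c0 * Complex.exp (Complex.I * (↑k * (↑x - ↑c0 * ↑t - ↑ξ0)) + ↑φ)
          * (↑β + (1 + Complex.I * (↑c * (↑x - ↑c * ↑t - ↑η0))))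
        + Complex.I * ↑c^2
          * (1 + Complex.exp (Complex.I * (↑k * (↑x - ↑c0 * ↑t - ↑ξ0)) + ↑φ))) t := by
    rw [hfe]
    have h := (((hexpT t).const_sub 1).const_mul (β:ℂ)).sub (hNT.mul ((hexpT t).const_add 1))
    refine h.congr_deriv ?_
    ring
  have hgT : HasDerivAt (fun s : ℝ => f' x s)
      (Complex.I * ↑k * ↑c0 * Complex.exp (Complex.I * (↑k * (↑x - ↑c0 * ↑t - ↑ξ0)) - ↑φ)
          * (↑β - (1 - Complex.I * (↑c * (↑x - ↑c * ↑t - ↑η0))))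
        + Complex.I * ↑c^2
          * (1 + Complex.exp (Complex.I * (↑k * (↑x - ↑c0 * ↑t - ↑ξ0)) - ↑φ))) t := by
    rw [hge]
    have h := (((hexpT' t).const_sub 1).const_mul (β:ℂ)).add (hMT.mul ((hexpT' t).const_add 1))
    refine h.congr_deriv ?_
    ring
  -- space derivatives of f and f'
  have hfeX : (fun y : ℝ => f y t) = (fun y : ℝ =>
      ↑β * (1 - Complex.exp (Complex.I * (↑k * (↑y - ↑c0 * ↑t - ↑ξ0)) + ↑φ))
        - (1 + Complex.I * (↑c * (↑y - ↑c * ↑t - ↑η0)))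
            * (1 + Complex.exp (Complex.I * (↑k * (↑y - ↑c0 * ↑t - ↑ξ0)) + ↑φ))) :=
    funext fun y => hf y t
  have hgeX : (fun y : ℝ => f' y t) = (fun y : ℝ =>
      ↑β * (1 - Complex.exp (Complex.I * (↑k * (↑y - ↑c0 * ↑t - ↑ξ0)) - ↑φ))
        + (1 - Complex.I * (↑c * (↑y - ↑c * ↑t - ↑η0)))
            * (1 + Complex.exp (Complex.I * (↑k * (↑y - ↑c0 * ↑t - ↑ξ0)) - ↑φ))) :=
    funext fun y => hf' y t
  have hfX : ∀ w : ℝ, HasDerivAt (fun y : ℝ => f y t)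
      (-(Complex.I * ↑k * (Complex.exp (Complex.I * (↑k * (↑w - ↑c0 * ↑t - ↑ξ0)) + ↑φ)
            * (↑β + (1 + Complex.I * (↑c * (↑w - ↑c * ↑t - ↑η0))))))
        - Complex.I * ↑c
          * (1 + Complex.exp (Complex.I * (↑k * (↑w - ↑c0 * ↑t - ↑ξ0)) + ↑φ))) w := by
    intro w
    rw [hfeX]
    have h := (((hexpX w).const_sub 1).const_mul (β:ℂ)).sub
      ((hNX w).mul ((hexpX w).const_add 1))
    refine h.congr_deriv ?_
    ring
  have hgX : ∀ w : ℝ, HasDerivAt (fun y : ℝ => f' y t)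
      (-(Complex.I * ↑k * (Complex.exp (Complex.I * (↑k * (↑w - ↑c0 * ↑t - ↑ξ0)) - ↑φ)
            * (↑β - (1 - Complex.I * (↑c * (↑w - ↑c * ↑t - ↑η0))))))
        - Complex.I * ↑c
          * (1 + Complex.exp (Complex.I * (↑k * (↑w - ↑c0 * ↑t - ↑ξ0)) - ↑φ))) w := by
    intro w
    rw [hgeX]
    have h := (((hexpX' w).const_sub 1).const_mul (β:ℂ)).add
      ((hMX w).mul ((hexpX' w).const_add 1))
    refine h.congr_deriv ?_
    ring
  -- second space derivatives
  have hfXX : HasDerivAt (fun w : ℝ =>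
      -(Complex.I * ↑k * (Complex.exp (Complex.I * (↑k * (↑w - ↑c0 * ↑t - ↑ξ0)) + ↑φ)
            * (↑β + (1 + Complex.I * (↑c * (↑w - ↑c * ↑t - ↑η0))))))
        - Complex.I * ↑c
          * (1 + Complex.exp (Complex.I * (↑k * (↑w - ↑c0 * ↑t - ↑ξ0)) + ↑φ)))
      ((↑k)^2 * (Complex.exp (Complex.I * (↑k * (↑x - ↑c0 * ↑t - ↑ξ0)) + ↑φ)
          * (↑β + (1 + Complex.I * (↑c * (↑x - ↑c * ↑t - ↑η0)))))
        + 2*↑c*↑k * Complex.exp (Complex.I * (↑k * (↑x - ↑c0 * ↑t - ↑ξ0)) + ↑φ)) x := by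
    have h := ((((hexpX x).mul ((hNX x).const_add (β:ℂ))).const_mul
        (Complex.I * ↑k)).neg).sub (((hexpX x).const_add 1).const_mul (Complex.I * ↑c))
    refine h.congr_deriv ?_
    symm
    linear_combination ((↑k:ℂ)^2 * (Complex.exp (Complex.I * (↑k * (↑x - ↑c0 * ↑t - ↑ξ0)) + ↑φ)
          * (↑β + (1 + Complex.I * (↑c * (↑x - ↑c * ↑t - ↑η0)))))
        + 2*↑c*↑k * Complex.exp (Complex.I * (↑k * (↑x - ↑c0 * ↑t - ↑ξ0)) + ↑φ)) * Complex.I_sq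
  have hgXX : HasDerivAt (fun w : ℝ =>
      -(Complex.I * ↑k * (Complex.exp (Complex.I * (↑k * (↑w - ↑c0 * ↑t - ↑ξ0)) - ↑φ)
            * (↑β - (1 - Complex.I * (↑c * (↑w - ↑c * ↑t - ↑η0))))))
        - Complex.I * ↑c
          * (1 + Complex.exp (Complex.I * (↑k * (↑w - ↑c0 * ↑t - ↑ξ0)) - ↑φ)))
      ((↑k)^2 * (Complex.exp (Complex.I * (↑k * (↑x - ↑c0 * ↑t - ↑ξ0)) - ↑φ)
          * (↑β - (1 - Complex.I * (↑c * (↑x - ↑c * ↑t - ↑η0)))))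
        + 2*↑c*↑k * Complex.exp (Complex.I * (↑k * (↑x - ↑c0 * ↑t - ↑ξ0)) - ↑φ)) x := by
    have h := ((((hexpX' x).mul ((hMX x).const_sub (β:ℂ))).const_mul
        (Complex.I * ↑k)).neg).sub (((hexpX' x).const_add 1).const_mul (Complex.I * ↑c))
    refine h.congr_deriv ?_
    symm
    linear_combination ((↑k:ℂ)^2 * (Complex.exp (Complex.I * (↑k * (↑x - ↑c0 * ↑t - ↑ξ0)) - ↑φ)
          * (↑β - (1 - Complex.I * (↑c * (↑x - ↑c * ↑t - ↑η0)))))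
        + 2*↑c*↑k * Complex.exp (Complex.I * (↑k * (↑x - ↑c0 * ↑t - ↑ξ0)) - ↑φ)) * Complex.I_sq
  -- rewrite all derivatives in the goal
  have hd2f : deriv (fun z : ℝ => f z t) = fun w : ℝ =>
      -(Complex.I * ↑k * (Complex.exp (Complex.I * (↑k * (↑w - ↑c0 * ↑t - ↑ξ0)) + ↑φ)
            * (↑β + (1 + Complex.I * (↑c * (↑w - ↑c * ↑t - ↑η0))))))
        - Complex.I * ↑c
          * (1 + Complex.exp (Complex.I * (↑k * (↑w - ↑c0 * ↑t - ↑ξ0)) + ↑φ)) :=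
    funext fun w => (hfX w).deriv
  have hd2g : deriv (fun z : ℝ => f' z t) = fun w : ℝ =>
      -(Complex.I * ↑k * (Complex.exp (Complex.I * (↑k * (↑w - ↑c0 * ↑t - ↑ξ0)) - ↑φ)
            * (↑β - (1 - Complex.I * (↑c * (↑w - ↑c * ↑t - ↑η0))))))
        - Complex.I * ↑c
          * (1 + Complex.exp (Complex.I * (↑k * (↑w - ↑c0 * ↑t - ↑ξ0)) - ↑φ)) :=
    funext fun w => (hgX w).deriv
  simp only [hd2f, hd2g]
  rw [hfXX.deriv, hgXX.deriv, hfT.deriv, hgT.deriv, hf x t, hf' x t]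
  -- relate the two exponentials
  have hEp : Complex.exp (Complex.I * (↑k * (↑x - ↑c0 * ↑t - ↑ξ0)) + ↑φ)
      = Complex.exp (Complex.I * (↑k * (↑x - ↑c0 * ↑t - ↑ξ0)) - ↑φ)
        * Complex.exp (2*(φ:ℂ)) := by
    rw [← Complex.exp_add]
    congr 1
    ring
  rw [hEp]
  set E := Complex.exp (Complex.I * (↑k * (↑x - ↑c0 * ↑t - ↑ξ0)) - ↑φ) with hEdef
  set R := Complex.exp (2*(φ:ℂ)) with hRdef
  set W := Complex.I * (↑c * (↑x - ↑c * ↑t - ↑η0)) with hWdef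
  clear_value E R W
  apply mul_left_cancel₀ (show ((c0:ℂ) - ↑k) * (((c:ℂ) - ↑c0)^2 - (↑k)^2) ≠ 0 from
    mul_ne_zero hc0kc hDc)
  linear_combination (E*(k:ℂ)^4 + (-1:ℂ)*E*(c0:ℂ)*(k:ℂ)^3 + (-1:ℂ)*E*(c0:ℂ)^2*(k:ℂ)^2 + E*(c0:ℂ)^3*(k:ℂ) + (4:ℂ)*E*(c:ℂ)*(k:ℂ)^3 + (2:ℂ)*E*(c:ℂ)*(c0:ℂ)*(k:ℂ)^2 + ((-6):ℂ)*E*(c:ℂ)*(c0:ℂ)^2*(k:ℂ) + (-1:ℂ)*E*(c:ℂ)^2*(k:ℂ)^2 + (9:ℂ)*E*(c:ℂ)^2*(c0:ℂ)*(k:ℂ) + ((-4):ℂ)*E*(c:ℂ)^3*(k:ℂ) + (2:ℂ)*E*(β:ℂ)*(k:ℂ)^4 + ((-2):ℂ)*E*(β:ℂ)*(c0:ℂ)*(k:ℂ)^3 + ((-2):ℂ)*E*(β:ℂ)*(c0:ℂ)^2*(k:ℂ)^2 + (2:ℂ)*E*(β:ℂ)*(c0:ℂ)^3*(k:ℂ)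 + (4:ℂ)*E*(β:ℂ)*(c:ℂ)*(k:ℂ)^3 + (4:ℂ)*E*(β:ℂ)*(c:ℂ)*(c0:ℂ)*(k:ℂ)^2 + ((-8):ℂ)*E*(β:ℂ)*(c:ℂ)*(c0:ℂ)^2*(k:ℂ) + ((-4):ℂ)*E*(β:ℂ)*(c:ℂ)^2*(k:ℂ)^2 + (10:ℂ)*E*(β:ℂ)*(c:ℂ)^2*(c0:ℂ)*(k:ℂ) + (2:ℂ)*E*(β:ℂ)*(c:ℂ)^2*(c0:ℂ)^2 + ((-4):ℂ)*E*(β:ℂ)*(c:ℂ)^3*(k:ℂ) + ((-4):ℂ)*E*(β:ℂ)*(c:ℂ)^3*(c0:ℂ) + (2:ℂ)*E*(β:ℂ)*(c:ℂ)^4 + E*(β:ℂ)^2*(k:ℂ)^4 + (-1:ℂ)*E*(β:ℂ)^2*(c0:ℂ)*(k:ℂ)^3 + (-1:ℂ)*E*(β:ℂ)^2*(c0:ℂ)^2*(k:ℂ)^2 + E*(β:ℂ)^2*(c0:ℂ)^3*(k:ℂ) + (2:ℂ)*E*(β:ℂ)^2*(c:ℂ)*(c0:ℂ)*(k:ℂ)^2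 + ((-2):ℂ)*E*(β:ℂ)^2*(c:ℂ)*(c0:ℂ)^2*(k:ℂ) + (-1:ℂ)*E*(β:ℂ)^2*(c:ℂ)^2*(k:ℂ)^2 + E*(β:ℂ)^2*(c:ℂ)^2*(c0:ℂ)*(k:ℂ) + (-1:ℂ)*E*W^2*(k:ℂ)^4 + E*W^2*(c0:ℂ)*(k:ℂ)^3 + E*W^2*(c0:ℂ)^2*(k:ℂ)^2 + (-1:ℂ)*E*W^2*(c0:ℂ)^3*(k:ℂ) + ((-2):ℂ)*E*W^2*(c:ℂ)*(c0:ℂ)*(k:ℂ)^2 + (2:ℂ)*E*W^2*(c:ℂ)*(c0:ℂ)^2*(k:ℂ) + E*W^2*(c:ℂ)^2*(k:ℂ)^2 + (-1:ℂ)*E*W^2*(c:ℂ)^2*(c0:ℂ)*(k:ℂ)) * hRC + (((-4):ℂ)*E*(k:ℂ)^3 + (4:ℂ)*E*(c0:ℂ)^2*(k:ℂ) + ((-8):ℂ)*E*(c:ℂ)*(c0:ℂ)*(k:ℂ) + (4:ℂ)*E*(c:ℂ)^2*(k:ℂ)) * hBc + (E*(c0:ℂ)*(k:ℂ)^4 +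 (-1:ℂ)*E*(c0:ℂ)^2*(k:ℂ)^3 + (-1:ℂ)*E*(c0:ℂ)^3*(k:ℂ)^2 + E*(c0:ℂ)^4*(k:ℂ) + ((-2):ℂ)*E*(c:ℂ)*(k:ℂ)^4 + (2:ℂ)*E*(c:ℂ)*(c0:ℂ)*(k:ℂ)^3 + (4:ℂ)*E*(c:ℂ)*(c0:ℂ)^2*(k:ℂ)^2 + ((-4):ℂ)*E*(c:ℂ)*(c0:ℂ)^3*(k:ℂ) + ((-5):ℂ)*E*(c:ℂ)^2*(c0:ℂ)*(k:ℂ)^2 + (5:ℂ)*E*(c:ℂ)^2*(c0:ℂ)^2*(k:ℂ) + (2:ℂ)*E*(c:ℂ)^3*(k:ℂ)^2 + ((-2):ℂ)*E*(c:ℂ)^3*(c0:ℂ)*(k:ℂ) + ((-2):ℂ)*E*(β:ℂ)*(c0:ℂ)*(k:ℂ)^4 + (2:ℂ)*E*(β:ℂ)*(c0:ℂ)^2*(k:ℂ)^3 + (2:ℂ)*E*(β:ℂ)*(c0:ℂ)^3*(k:ℂ)^2 + ((-2):ℂ)*E*(β:ℂ)*(c0:ℂ)^4*(k:ℂ) +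 (2:ℂ)*E*(β:ℂ)*(c:ℂ)*(k:ℂ)^4 + ((-2):ℂ)*E*(β:ℂ)*(c:ℂ)*(c0:ℂ)*(k:ℂ)^3 + ((-6):ℂ)*E*(β:ℂ)*(c:ℂ)*(c0:ℂ)^2*(k:ℂ)^2 + (6:ℂ)*E*(β:ℂ)*(c:ℂ)*(c0:ℂ)^3*(k:ℂ) + (2:ℂ)*E*(β:ℂ)*(c:ℂ)^2*(k:ℂ)^3 + (4:ℂ)*E*(β:ℂ)*(c:ℂ)^2*(c0:ℂ)*(k:ℂ)^2 + ((-8):ℂ)*E*(β:ℂ)*(c:ℂ)^2*(c0:ℂ)^2*(k:ℂ) + (2:ℂ)*E*(β:ℂ)*(c:ℂ)^2*(c0:ℂ)^3 + ((-2):ℂ)*E*(β:ℂ)*(c:ℂ)^3*(k:ℂ)^2 + (6:ℂ)*E*(β:ℂ)*(c:ℂ)^3*(c0:ℂ)*(k:ℂ) + ((-4):ℂ)*E*(β:ℂ)*(c:ℂ)^3*(c0:ℂ)^2 + ((-2):ℂ)*E*(β:ℂ)*(c:ℂ)^4*(k:ℂ) + (2:ℂ)*E*(β:ℂ)*(c:ℂ)^4*(c0:ℂ)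 + E*(β:ℂ)^2*(c0:ℂ)*(k:ℂ)^4 + (-1:ℂ)*E*(β:ℂ)^2*(c0:ℂ)^2*(k:ℂ)^3 + (-1:ℂ)*E*(β:ℂ)^2*(c0:ℂ)^3*(k:ℂ)^2 + E*(β:ℂ)^2*(c0:ℂ)^4*(k:ℂ) + (2:ℂ)*E*(β:ℂ)^2*(c:ℂ)*(c0:ℂ)^2*(k:ℂ)^2 + ((-2):ℂ)*E*(β:ℂ)^2*(c:ℂ)*(c0:ℂ)^3*(k:ℂ) + (-1:ℂ)*E*(β:ℂ)^2*(c:ℂ)^2*(c0:ℂ)*(k:ℂ)^2 + E*(β:ℂ)^2*(c:ℂ)^2*(c0:ℂ)^2*(k:ℂ) + (2:ℂ)*E*W*(c:ℂ)*(k:ℂ)^4 + ((-2):ℂ)*E*W*(c:ℂ)*(c0:ℂ)*(k:ℂ)^3 + ((-2):ℂ)*E*W*(c:ℂ)*(c0:ℂ)^2*(k:ℂ)^2 + (2:ℂ)*E*W*(c:ℂ)*(c0:ℂ)^3*(k:ℂ) + (4:ℂ)*E*W*(c:ℂ)^2*(c0:ℂ)*(k:ℂ)^2 + ((-4):ℂ)*E*W*(c:ℂ)^2*(c0:ℂ)^2*(k:ℂ)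 + ((-2):ℂ)*E*W*(c:ℂ)^3*(k:ℂ)^2 + (2:ℂ)*E*W*(c:ℂ)^3*(c0:ℂ)*(k:ℂ) + (-1:ℂ)*E*W^2*(c0:ℂ)*(k:ℂ)^4 + E*W^2*(c0:ℂ)^2*(k:ℂ)^3 + E*W^2*(c0:ℂ)^3*(k:ℂ)^2 + (-1:ℂ)*E*W^2*(c0:ℂ)^4*(k:ℂ) + ((-2):ℂ)*E*W^2*(c:ℂ)*(c0:ℂ)^2*(k:ℂ)^2 + (2:ℂ)*E*W^2*(c:ℂ)*(c0:ℂ)^3*(k:ℂ) + E*W^2*(c:ℂ)^2*(c0:ℂ)*(k:ℂ)^2 + (-1:ℂ)*E*W^2*(c:ℂ)^2*(c0:ℂ)^2*(k:ℂ) + (-1:ℂ)*E*R*(c0:ℂ)*(k:ℂ)^4 + E*R*(c0:ℂ)^2*(k:ℂ)^3 + E*R*(c0:ℂ)^3*(k:ℂ)^2 + (-1:ℂ)*E*R*(c0:ℂ)^4*(k:ℂ) + (2:ℂ)*E*R*(c:ℂ)*(k:ℂ)^4 + ((-2):ℂ)*E*R*(c:ℂ)*(c0:ℂ)*(k:ℂ)^3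 + ((-4):ℂ)*E*R*(c:ℂ)*(c0:ℂ)^2*(k:ℂ)^2 + (4:ℂ)*E*R*(c:ℂ)*(c0:ℂ)^3*(k:ℂ) + (5:ℂ)*E*R*(c:ℂ)^2*(c0:ℂ)*(k:ℂ)^2 + ((-5):ℂ)*E*R*(c:ℂ)^2*(c0:ℂ)^2*(k:ℂ) + ((-2):ℂ)*E*R*(c:ℂ)^3*(k:ℂ)^2 + (2:ℂ)*E*R*(c:ℂ)^3*(c0:ℂ)*(k:ℂ) + ((-2):ℂ)*E*R*(β:ℂ)*(c0:ℂ)*(k:ℂ)^4 + (2:ℂ)*E*R*(β:ℂ)*(c0:ℂ)^2*(k:ℂ)^3 + (2:ℂ)*E*R*(β:ℂ)*(c0:ℂ)^3*(k:ℂ)^2 + ((-2):ℂ)*E*R*(β:ℂ)*(c0:ℂ)^4*(k:ℂ) + (2:ℂ)*E*R*(β:ℂ)*(c:ℂ)*(k:ℂ)^4 + ((-2):ℂ)*E*R*(β:ℂ)*(c:ℂ)*(c0:ℂ)*(k:ℂ)^3 + ((-6):ℂ)*E*R*(β:ℂ)*(c:ℂ)*(c0:ℂ)^2*(k:ℂ)^2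 + (6:ℂ)*E*R*(β:ℂ)*(c:ℂ)*(c0:ℂ)^3*(k:ℂ) + ((-2):ℂ)*E*R*(β:ℂ)*(c:ℂ)^2*(k:ℂ)^3 + (8:ℂ)*E*R*(β:ℂ)*(c:ℂ)^2*(c0:ℂ)*(k:ℂ)^2 + ((-4):ℂ)*E*R*(β:ℂ)*(c:ℂ)^2*(c0:ℂ)^2*(k:ℂ) + ((-2):ℂ)*E*R*(β:ℂ)*(c:ℂ)^2*(c0:ℂ)^3 + ((-2):ℂ)*E*R*(β:ℂ)*(c:ℂ)^3*(k:ℂ)^2 + ((-2):ℂ)*E*R*(β:ℂ)*(c:ℂ)^3*(c0:ℂ)*(k:ℂ) + (4:ℂ)*E*R*(β:ℂ)*(c:ℂ)^3*(c0:ℂ)^2 + (2:ℂ)*E*R*(β:ℂ)*(c:ℂ)^4*(k:ℂ) + ((-2):ℂ)*E*R*(β:ℂ)*(c:ℂ)^4*(c0:ℂ) + (-1:ℂ)*E*R*(β:ℂ)^2*(c0:ℂ)*(k:ℂ)^4 + E*R*(β:ℂ)^2*(c0:ℂ)^2*(k:ℂ)^3 + E*R*(β:ℂ)^2*(c0:ℂ)^3*(k:ℂ)^2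 + (-1:ℂ)*E*R*(β:ℂ)^2*(c0:ℂ)^4*(k:ℂ) + ((-2):ℂ)*E*R*(β:ℂ)^2*(c:ℂ)*(c0:ℂ)^2*(k:ℂ)^2 + (2:ℂ)*E*R*(β:ℂ)^2*(c:ℂ)*(c0:ℂ)^3*(k:ℂ) + E*R*(β:ℂ)^2*(c:ℂ)^2*(c0:ℂ)*(k:ℂ)^2 + (-1:ℂ)*E*R*(β:ℂ)^2*(c:ℂ)^2*(c0:ℂ)^2*(k:ℂ) + (2:ℂ)*E*R*W*(c:ℂ)*(k:ℂ)^4 + ((-2):ℂ)*E*R*W*(c:ℂ)*(c0:ℂ)*(k:ℂ)^3 + ((-2):ℂ)*E*R*W*(c:ℂ)*(c0:ℂ)^2*(k:ℂ)^2 + (2:ℂ)*E*R*W*(c:ℂ)*(c0:ℂ)^3*(k:ℂ) + (4:ℂ)*E*R*W*(c:ℂ)^2*(c0:ℂ)*(k:ℂ)^2 + ((-4):ℂ)*E*R*W*(c:ℂ)^2*(c0:ℂ)^2*(k:ℂ) + ((-2):ℂ)*E*R*W*(c:ℂ)^3*(k:ℂ)^2 + (2:ℂ)*E*R*W*(c:ℂ)^3*(c0:ℂ)*(k:ℂ)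 + E*R*W^2*(c0:ℂ)*(k:ℂ)^4 + (-1:ℂ)*E*R*W^2*(c0:ℂ)^2*(k:ℂ)^3 + (-1:ℂ)*E*R*W^2*(c0:ℂ)^3*(k:ℂ)^2 + E*R*W^2*(c0:ℂ)^4*(k:ℂ) + (2:ℂ)*E*R*W^2*(c:ℂ)*(c0:ℂ)^2*(k:ℂ)^2 + ((-2):ℂ)*E*R*W^2*(c:ℂ)*(c0:ℂ)^3*(k:ℂ) + (-1:ℂ)*E*R*W^2*(c:ℂ)^2*(c0:ℂ)*(k:ℂ)^2 + E*R*W^2*(c:ℂ)^2*(c0:ℂ)^2*(k:ℂ) + ((-2):ℂ)*E^2*R*(k:ℂ)^5 + (2:ℂ)*E^2*R*(c0:ℂ)*(k:ℂ)^4 + (2:ℂ)*E^2*R*(c0:ℂ)^2*(k:ℂ)^3 + ((-2):ℂ)*E^2*R*(c0:ℂ)^3*(k:ℂ)^2 + ((-4):ℂ)*E^2*R*(c:ℂ)*(c0:ℂ)*(k:ℂ)^3 + (4:ℂ)*E^2*R*(c:ℂ)*(c0:ℂ)^2*(k:ℂ)^2 + (2:ℂ)*E^2*R*(c:ℂ)^2*(k:ℂ)^3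 + ((-2):ℂ)*E^2*R*(c:ℂ)^2*(c0:ℂ)*(k:ℂ)^2 + (4:ℂ)*E^2*R*(β:ℂ)*(c:ℂ)*(k:ℂ)^4 + ((-4):ℂ)*E^2*R*(β:ℂ)*(c:ℂ)*(c0:ℂ)*(k:ℂ)^3 + ((-4):ℂ)*E^2*R*(β:ℂ)*(c:ℂ)*(c0:ℂ)^2*(k:ℂ)^2 + (4:ℂ)*E^2*R*(β:ℂ)*(c:ℂ)*(c0:ℂ)^3*(k:ℂ) + (8:ℂ)*E^2*R*(β:ℂ)*(c:ℂ)^2*(c0:ℂ)*(k:ℂ)^2 + ((-8):ℂ)*E^2*R*(β:ℂ)*(c:ℂ)^2*(c0:ℂ)^2*(k:ℂ) + ((-4):ℂ)*E^2*R*(β:ℂ)*(c:ℂ)^3*(k:ℂ)^2 + (4:ℂ)*E^2*R*(β:ℂ)*(c:ℂ)^3*(c0:ℂ)*(k:ℂ) + (2:ℂ)*E^2*R*(β:ℂ)^2*(k:ℂ)^5 + ((-2):ℂ)*E^2*R*(β:ℂ)^2*(c0:ℂ)*(k:ℂ)^4 + ((-2):ℂ)*E^2*R*(β:ℂ)^2*(c0:ℂ)^2*(k:ℂ)^3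 + (2:ℂ)*E^2*R*(β:ℂ)^2*(c0:ℂ)^3*(k:ℂ)^2 + (4:ℂ)*E^2*R*(β:ℂ)^2*(c:ℂ)*(c0:ℂ)*(k:ℂ)^3 + ((-4):ℂ)*E^2*R*(β:ℂ)^2*(c:ℂ)*(c0:ℂ)^2*(k:ℂ)^2 + ((-2):ℂ)*E^2*R*(β:ℂ)^2*(c:ℂ)^2*(k:ℂ)^3 + (2:ℂ)*E^2*R*(β:ℂ)^2*(c:ℂ)^2*(c0:ℂ)*(k:ℂ)^2 + (4:ℂ)*E^2*R*W*(c:ℂ)*(k:ℂ)^4 + ((-4):ℂ)*E^2*R*W*(c:ℂ)*(c0:ℂ)*(k:ℂ)^3 + ((-4):ℂ)*E^2*R*W*(c:ℂ)*(c0:ℂ)^2*(k:ℂ)^2 + (4:ℂ)*E^2*R*W*(c:ℂ)*(c0:ℂ)^3*(k:ℂ) + (8:ℂ)*E^2*R*W*(c:ℂ)^2*(c0:ℂ)*(k:ℂ)^2 + ((-8):ℂ)*E^2*R*W*(c:ℂ)^2*(c0:ℂ)^2*(k:ℂ) + ((-4):ℂ)*E^2*R*W*(c:ℂ)^3*(k:ℂ)^2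 + (4:ℂ)*E^2*R*W*(c:ℂ)^3*(c0:ℂ)*(k:ℂ) + (4:ℂ)*E^2*R*W*(β:ℂ)*(k:ℂ)^5 + ((-4):ℂ)*E^2*R*W*(β:ℂ)*(c0:ℂ)*(k:ℂ)^4 + ((-4):ℂ)*E^2*R*W*(β:ℂ)*(c0:ℂ)^2*(k:ℂ)^3 + (4:ℂ)*E^2*R*W*(β:ℂ)*(c0:ℂ)^3*(k:ℂ)^2 + (8:ℂ)*E^2*R*W*(β:ℂ)*(c:ℂ)*(c0:ℂ)*(k:ℂ)^3 + ((-8):ℂ)*E^2*R*W*(β:ℂ)*(c:ℂ)*(c0:ℂ)^2*(k:ℂ)^2 + ((-4):ℂ)*E^2*R*W*(β:ℂ)*(c:ℂ)^2*(k:ℂ)^3 + (4:ℂ)*E^2*R*W*(β:ℂ)*(c:ℂ)^2*(c0:ℂ)*(k:ℂ)^2 + (2:ℂ)*E^2*R*W^2*(k:ℂ)^5 + ((-2):ℂ)*E^2*R*W^2*(c0:ℂ)*(k:ℂ)^4 + ((-2):ℂ)*E^2*R*W^2*(c0:ℂ)^2*(k:ℂ)^3 + (2:ℂ)*E^2*R*W^2*(c0:ℂ)^3*(k:ℂ)^2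 + (4:ℂ)*E^2*R*W^2*(c:ℂ)*(c0:ℂ)*(k:ℂ)^3 + ((-4):ℂ)*E^2*R*W^2*(c:ℂ)*(c0:ℂ)^2*(k:ℂ)^2 + ((-2):ℂ)*E^2*R*W^2*(c:ℂ)^2*(k:ℂ)^3 + (2:ℂ)*E^2*R*W^2*(c:ℂ)^2*(c0:ℂ)*(k:ℂ)^2) * Complex.I_sq
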